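/- There exists n₀ ∈ ℕ such that for all n ≥ n₀ the following holds. Let I ⊆ A ⊆ [n] with |I| ≥ (73/74)·n, and let I₁, I₂ be a bipartition of I (I = I₁ ∪ I₂, I₁ ∩ I₂ = ∅) with |I₁| ≤ |I₂|. Then there are at least |I₁|·|I₂|/9 − 3·|I₁|·(n − |A|) pairs (a, b) with a ∈ I₁ and b ∈ I₂ such that {a, b} is contained in some 3-AP of A. -/

import Mathlib

/-- The pair `{a, b}` is contained in some 3-AP of `A`: there is a 3-AP
`(u, u+d, u+2d)` with `d ≥ 1` and all three elements in `A` whose underlying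
set contains both `a` and `b`. -/
def PairInAP (A : Finset ℕ) (a b : ℕ) : Prop :=
  ∃ u d : ℕ, 0 < d ∧ u ∈ A ∧ u + d ∈ A ∧ u + 2 * d ∈ A ∧
    a ∈ ({u, u + d, u + 2 * d} : Set ℕ) ∧ b ∈ ({u, u + d, u + 2 * d} : Set ℕ)

lemma pairInAP_mk {A : Finset ℕ} {u d a b : ℕ} (hd : 0 < d)
    (h1 : u ∈ A) (h2 : u + d ∈ A) (h3 : u + 2 * d ∈ A)
    (ha : a = u ∨ a = u + d ∨ a = u + 2 * d)
    (hb : b = u ∨ b = u + d ∨ b = u + 2 * d) : PairInAP A a b :=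
  ⟨u, d, hd, h1, h2, h3, by simpa using ha, by simpa using hb⟩

lemma parity_count (c d r : ℕ) :
    ((Finset.Ioc c d).filter (fun b => b % 2 = r)).card ≤ (d - c + 1) / 2 := by
  classical
  have h := Finset.card_le_card_of_injOn
      (s := (Finset.Ioc c d).filter (fun b => b % 2 = r))
      (t := Finset.range ((d - c + 1) / 2))
      (fun b => (b - c - 1) / 2)
      (by
        intro b hb
        simp only [Finset.coe_filter, Set.mem_setOf_eq, Finset.mem_coe, Finset.mem_filter, Finset.mem_Ioc] at hb
        exact Finset.mem_range.mpr (show (b - c - 1) / 2 < (d - c + 1) / 2 by omega))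
      (by
        intro b1 h1 b2 h2 hEq
        simp only [Finset.coe_filter, Set.mem_setOf_eq, Finset.mem_Ioc] at h1 h2
        have hEq' : (b1 - c - 1) / 2 = (b2 - c - 1) / 2 := hEq
        omega)
  simpa using h

theorem stmt_10 :
    ∃ n₀ : ℕ, ∀ n : ℕ, n₀ ≤ n →
      ∀ I A I₁ I₂ : Finset ℕ, I ⊆ A → A ⊆ Finset.Icc 1 n →
        (73 / 74 : ℝ) * n ≤ (I.card : ℝ) →
        I₁ ∪ I₂ = I → Disjoint I₁ I₂ → I₁.card ≤ I₂.card →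
        (I₁.card : ℝ) * I₂.card / 9 - 3 * (I₁.card : ℝ) * ((n : ℝ) - A.card) ≤
          (Nat.card {p : ℕ × ℕ //
            p.1 ∈ I₁ ∧ p.2 ∈ I₂ ∧ PairInAP A p.1 p.2} : ℝ) := by
  classical
  refine ⟨1000, ?_⟩
  intro n hn I A I₁ I₂ hIA hAn hIcard hunion hdisj hle
  set G := (I₁ ×ˢ I₂).filter (fun p : ℕ × ℕ => PairInAP A p.1 p.2) with hGdef
  set D := (I₁ ×ˢ I₂).filter (fun p : ℕ × ℕ => ¬ PairInAP A p.1 p.2) with hDdef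
  have hAcard : A.card ≤ n := by
    have := Finset.card_le_card hAn
    simpa using this
  have hI₁A : I₁ ⊆ A := fun x hx => hIA (hunion ▸ Finset.mem_union_left _ hx)
  have hI₂A : I₂ ⊆ A := fun x hx => hIA (hunion ▸ Finset.mem_union_right _ hx)
  -- Nat.card rewriting
  have hNat : Nat.card {p : ℕ × ℕ // p.1 ∈ I₁ ∧ p.2 ∈ I₂ ∧ PairInAP A p.1 p.2}
      = G.card := by
    rw [← Nat.card_eq_finsetCard]
    refine Nat.card_congr (Equiv.subtypeEquivRight ?_)
    intro p
    simp [hGdef, Finset.mem_filter, Finset.mem_product, and_assoc]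
  set K := n / 4 + 2 + 3 * (n - A.card) with hKdef
  -- fiber bound
  have hfiber : ∀ a ∈ I₁, (D.filter (fun p => p.1 = a)).card ≤ K := by
    intro a ha
    have haA : a ∈ A := hI₁A ha
    have han : 1 ≤ a ∧ a ≤ n := by
      have := hAn haA; rwa [Finset.mem_Icc] at this
    set S₁ := (Finset.Ioc ((n + a) / 2) n).filter (fun b => b % 2 = (a + 1) % 2) with hS₁
    set S₂ := (Finset.Ioc 0 (a / 2)).filter (fun b => b % 2 = (a + 1) % 2) with hS₂
    set M := ((Finset.Icc 1 n) \ A).biUnion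
        (fun x => (Finset.Icc 1 n).filter
          (fun b => a + b = 2 * x ∨ 2 * b = a + x ∨ b + x = 2 * a)) with hM
    have hsubset : ∀ p ∈ D.filter (fun p => p.1 = a), p.2 ∈ S₁ ∪ S₂ ∪ M := by
      intro p hp
      simp only [Finset.mem_filter, hDdef, Finset.mem_product] at hp
      obtain ⟨⟨⟨hpa, hpb⟩, hbad⟩, hpeq⟩ := hp
      set b := p.2 with hbdef
      have hbA : b ∈ A := hI₂A hpb
      have hbn : 1 ≤ b ∧ b ≤ n := by
        have := hAn hbA; rwa [Finset.mem_Icc] at this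
      rw [hpeq] at hbad
      have hab : a ≠ b := by
        intro h
        exact (Finset.disjoint_left.mp hdisj ha) (h ▸ hpb)
      have memM : ∀ x : ℕ, 1 ≤ x → x ≤ n → x ∉ A →
          (a + b = 2 * x ∨ 2 * b = a + x ∨ b + x = 2 * a) → b ∈ S₁ ∪ S₂ ∪ M := by
        intro x hx1 hx2 hxA hor
        refine Finset.mem_union_right _ (Finset.mem_biUnion.mpr ⟨x, ?_, ?_⟩)
        · exact Finset.mem_sdiff.mpr ⟨Finset.mem_Icc.mpr ⟨hx1, hx2⟩, hxA⟩
        · exact Finset.mem_filter.mpr ⟨Finset.mem_Icc.mpr ⟨hbn.1, hbn.2⟩, hor⟩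
      by_cases hpar : a % 2 = b % 2
      · -- same parity: midpoint
        set w := (a + b) / 2 with hw
        have hwA : w ∉ A := by
          intro hwmem
          rcases Nat.lt_or_ge a b with hlt | hge
          · exact hbad (pairInAP_mk (u := a) (d := (b - a) / 2) (by omega) haA
              (by rw [show a + (b - a) / 2 = w by omega]; exact hwmem)
              (by rw [show a + 2 * ((b - a) / 2) = b by omega]; exact hbA)
              (Or.inl rfl) (Or.inr (Or.inr (by omega))))
          · have hlt : b < a := by omega
            exact hbad (pairInAP_mk (u := b) (d := (a - b) / 2) (by omega) hbA
              (by rw [show b + (a - b) / 2 = w by omega]; exact hwmem)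
              (by rw [show b + 2 * ((a - b) / 2) = a by omega]; exact haA)
              (Or.inr (Or.inr (by omega))) (Or.inl rfl))
        exact memM w (by omega) (by omega) hwA (Or.inl (by omega))
      · -- different parity
        rcases Nat.lt_or_ge a b with hlt | hge
        · by_cases hrange : 2 * b ≤ n + a
          · -- extend right: z = 2b - a
            set z := 2 * b - a with hz
            have hzA : z ∉ A := by
              intro hzmem
              exact hbad (pairInAP_mk (u := a) (d := b - a) (by omega) haA
                (by rw [show a + (b - a) = b by omega]; exact hbA)
                (by rw [show a + 2 * (b - a) = z by omega]; exact hzmem)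
                (Or.inl rfl) (Or.inr (Or.inl (by omega))))
            exact memM z (by omega) (by omega) hzA (Or.inr (Or.inl (by omega)))
          · -- geometrically bad high
            refine Finset.mem_union_left _ (Finset.mem_union_left _ ?_)
            rw [hS₁, Finset.mem_filter, Finset.mem_Ioc]
            omega
        · have hgt : b < a := by omega
          by_cases hrange : 2 * a ≤ n + b
          · set z := 2 * a - b with hz
            have hzA : z ∉ A := by
              intro hzmem
              exact hbad (pairInAP_mk (u := b) (d := a - b) (by omega) hbA
                (by rw [show b + (a - b) = a by omega]; exact haA)
                (by rw [show b + 2 * (a - b) = z by omega]; exact hzmem)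
                (Or.inr (Or.inl (by omega))) (Or.inl rfl))
            exact memM z (by omega) (by omega) hzA (Or.inr (Or.inr (by omega)))
          · by_cases hrange2 : a + 1 ≤ 2 * b
            · set w := 2 * b - a with hw
              have hwA : w ∉ A := by
                intro hwmem
                exact hbad (pairInAP_mk (u := w) (d := a - b) (by omega) hwmem
                  (by rw [show w + (a - b) = b by omega]; exact hbA)
                  (by rw [show w + 2 * (a - b) = a by omega]; exact haA)
                  (Or.inr (Or.inr (by omega))) (Or.inr (Or.inl (by omega))))
              exact memM w (by omega) (by omega) hwA (Or.inr (Or.inl (by omega)))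
            · -- geometrically bad low
              refine Finset.mem_union_left _ (Finset.mem_union_right _ ?_)
              rw [hS₂, Finset.mem_filter, Finset.mem_Ioc]
              omega
    have hcard1 : (D.filter (fun p => p.1 = a)).card ≤ (S₁ ∪ S₂ ∪ M).card := by
      refine Finset.card_le_card_of_injOn Prod.snd hsubset ?_
      intro p hp q hq h
      simp only [Finset.coe_filter, Set.mem_setOf_eq] at hp hq
      exact Prod.ext (hp.2.trans hq.2.symm) h
    have hMcard : M.card ≤ 3 * (n - A.card) := by
      refine le_trans (Finset.card_biUnion_le) ?_
      have h3 : ∀ x ∈ (Finset.Icc 1 n) \ A,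
          ((Finset.Icc 1 n).filter
            (fun b => a + b = 2 * x ∨ 2 * b = a + x ∨ b + x = 2 * a)).card ≤ 3 := by
        intro x _
        have hsub : (Finset.Icc 1 n).filter
            (fun b => a + b = 2 * x ∨ 2 * b = a + x ∨ b + x = 2 * a) ⊆
            ({2 * x - a, (a + x) / 2, 2 * a - x} : Finset ℕ) := by
          intro b hb
          simp only [Finset.mem_filter, Finset.mem_Icc] at hb
          simp only [Finset.mem_insert, Finset.mem_singleton]
          omega
        refine le_trans (Finset.card_le_card hsub) ?_
        refine le_trans (Finset.card_insert_le _ _) (Nat.succ_le_succ ?_)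
        refine le_trans (Finset.card_insert_le _ _) (Nat.succ_le_succ ?_)
        simp
      have hsd : ((Finset.Icc 1 n) \ A).card = n - A.card := by
        rw [Finset.card_sdiff_of_subset hAn]
        simp
      calc ∑ x ∈ (Finset.Icc 1 n) \ A, ((Finset.Icc 1 n).filter
            (fun b => a + b = 2 * x ∨ 2 * b = a + x ∨ b + x = 2 * a)).card
          ≤ ∑ _x ∈ (Finset.Icc 1 n) \ A, 3 := Finset.sum_le_sum h3
        _ = ((Finset.Icc 1 n) \ A).card * 3 := by rw [Finset.sum_const, smul_eq_mul]
        _ = 3 * (n - A.card) := by rw [hsd]; ring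
    have hS₁card : S₁.card ≤ (n - (n + a) / 2 + 1) / 2 := parity_count _ _ _
    have hS₂card : S₂.card ≤ (a / 2 - 0 + 1) / 2 := parity_count _ _ _
    calc (D.filter (fun p => p.1 = a)).card ≤ (S₁ ∪ S₂ ∪ M).card := hcard1
      _ ≤ (S₁ ∪ S₂).card + M.card := Finset.card_union_le _ _
      _ ≤ S₁.card + S₂.card + M.card := by
          have := Finset.card_union_le S₁ S₂; omega
      _ ≤ K := by rw [hKdef]; omega
  -- sum over fibers
  have hDcard : D.card ≤ I₁.card * K := by
    have hmaps : ∀ p ∈ D, p.1 ∈ I₁ := by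
      intro p hp
      simp only [hDdef, Finset.mem_filter, Finset.mem_product] at hp
      exact hp.1.1
    rw [Finset.card_eq_sum_card_fiberwise hmaps]
    calc ∑ a ∈ I₁, (D.filter (fun p => p.1 = a)).card
        ≤ I₁.card • K := Finset.sum_le_card_nsmul _ _ _ hfiber
      _ = I₁.card * K := by rw [smul_eq_mul]
  have hGD : G.card + D.card = I₁.card * I₂.card := by
    rw [← Finset.card_product]
    exact Finset.card_filter_add_card_filter_not _
  -- to reals
  rw [hNat]
  have hsum : I₁.card + I₂.card = I.card := by
    rw [← hunion, Finset.card_union_of_disjoint hdisj]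
  have hnR : (1000 : ℝ) ≤ (n : ℝ) := by exact_mod_cast hn
  have htR : (73 : ℝ) / 148 * n ≤ (I₂.card : ℝ) := by
    have h1 : (I₁.card : ℝ) ≤ (I₂.card : ℝ) := by exact_mod_cast hle
    have h2 : (I₁.card : ℝ) + (I₂.card : ℝ) = (I.card : ℝ) := by exact_mod_cast hsum
    linarith
  have hGreal : (I₁.card : ℝ) * I₂.card - (I₁.card : ℝ) * K ≤ (G.card : ℝ) := by
    have h1 : (I₁.card * I₂.card : ℕ) ≤ G.card + I₁.card * K := by omega
    have h2 : ((I₁.card * I₂.card : ℕ) : ℝ) ≤ ((G.card + I₁.card * K : ℕ) : ℝ) := by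
      exact_mod_cast h1
    push_cast at h2
    linarith
  have hKR : (K : ℝ) ≤ (n : ℝ) / 4 + 2 + 3 * ((n : ℝ) - A.card) := by
    have h1 : ((n / 4 : ℕ) : ℝ) ≤ (n : ℝ) / 4 := by
      have := Nat.cast_div_le (α := ℝ) (m := n) (n := 4)
      simpa using this
    have h2 : ((n - A.card : ℕ) : ℝ) = (n : ℝ) - A.card := by
      rw [Nat.cast_sub hAcard]
    rw [hKdef]
    push_cast [h2]
    linarith
  have hs0 : (0 : ℝ) ≤ (I₁.card : ℝ) := Nat.cast_nonneg _
  have hkey : (I₁.card : ℝ) * ((n : ℝ) / 4 + 2) ≤ 8 / 9 * ((I₁.card : ℝ) * I₂.card) := by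
    have hstep : (n : ℝ) / 4 + 2 ≤ 8 / 9 * (I₂.card : ℝ) := by linarith
    nlinarith [mul_le_mul_of_nonneg_left hstep hs0]
  have hAn0 : (0 : ℝ) ≤ (n : ℝ) - A.card := by
    have : (A.card : ℝ) ≤ n := by exact_mod_cast hAcard
    linarith
  have hKmul : (I₁.card : ℝ) * K ≤ (I₁.card : ℝ) * ((n : ℝ) / 4 + 2 + 3 * ((n : ℝ) - A.card)) :=
    mul_le_mul_of_nonneg_left hKR hs0
  nlinarith [hGreal, hKmul, hkey]
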